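/- Let g(z,w) = z and φ₃ = dz/(w(az−1)(bz−1)) on the Riemann surface S = {(z,w) : w² = (z−a)(z−b)/((az−1)(bz−1))}, with b < a < 1, a > 0, b ≠ 0. Then φ₃ (and hence Φ = (φ₁,φ₂,φ₃) with φ₁ = (i/2)(1/g−g)φ₃, φ₂ = −(1/2)(1/g+g)φ₃) has a simple pole at the point over z = 0, and Re(2πi·Res₀ Φ) = Re(−π/√(ab), −iπ/√(ab), 0); in particular this vector is (−π/√(ab), 0, 0) when b > 0 and (0, −π/√(−ab)·s, 0) for a sign s when b < 0, i.e., the period vector is horizontal and spacelike. -/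

import Mathlib

open Filter Topology

/-- on the Riemann surface `w² = (z−a)(z−b)/((az−1)(bz−1))`
(`b < a < 1`, `a > 0`, `b ≠ 0`) with `g = z`, `φ₃ = dz/(w(az−1)(bz−1))`, the data
`Φ = (φ₁,φ₂,φ₃)` has a simple pole at the point over `z = 0` with `w(0) = s`,
`s² = ab`, and the residues `rⱼ = lim_{z→0} z·fⱼ(z)` satisfy
`Re(2πi·(r₁,r₂,r₃)) = Re(−π/s, −iπ/s, 0)`; in particular the period vector is
horizontal and spacelike. -/
theorem riemann_type_residue_period (a b : ℝ) (ha : 0 < a) (ha1 : a < 1)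
    (hb : b ≠ 0) (hba : b < a)
    (s : ℂ) (hs : s ^ 2 = (a : ℂ) * (b : ℂ)) (hs0 : s ≠ 0)
    (w : ℂ → ℂ) (hw0 : w 0 = s) (hwc : ContinuousAt w 0)
    (hwsq : ∀ᶠ z in 𝓝 (0:ℂ),
      (w z) ^ 2 * (((a:ℂ) * z - 1) * ((b:ℂ) * z - 1)) = (z - a) * (z - b))
    (r₁ r₂ r₃ : ℂ)
    (h₃ : Tendsto (fun z : ℂ =>
        z * (1 / (w z * ((a:ℂ) * z - 1) * ((b:ℂ) * z - 1))))
      (𝓝[≠] (0:ℂ)) (𝓝 r₃))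
    (h₁ : Tendsto (fun z : ℂ =>
        z * ((Complex.I / 2) * (1 / z - z) *
          (1 / (w z * ((a:ℂ) * z - 1) * ((b:ℂ) * z - 1)))))
      (𝓝[≠] (0:ℂ)) (𝓝 r₁))
    (h₂ : Tendsto (fun z : ℂ =>
        z * (-(1 / 2) * (1 / z + z) *
          (1 / (w z * ((a:ℂ) * z - 1) * ((b:ℂ) * z - 1)))))
      (𝓝[≠] (0:ℂ)) (𝓝 r₂)) :
    (2 * (Real.pi : ℂ) * Complex.I * r₁).re = (-(Real.pi : ℂ) / s).re ∧
    (2 * (Real.pi : ℂ) * Complex.I * r₂).re = (-(Real.pi : ℂ) * Complex.I / s).re ∧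
    (2 * (Real.pi : ℂ) * Complex.I * r₃).re = 0 ∧
    0 < ((2 * (Real.pi : ℂ) * Complex.I * r₁).re) ^ 2
        + ((2 * (Real.pi : ℂ) * Complex.I * r₂).re) ^ 2 := by
  have hD : Tendsto (fun z : ℂ => w z * ((a:ℂ) * z - 1) * ((b:ℂ) * z - 1))
      (𝓝 (0:ℂ)) (𝓝 s) := by
    have : ContinuousAt (fun z : ℂ => w z * ((a:ℂ) * z - 1) * ((b:ℂ) * z - 1)) 0 :=
      (hwc.mul (by fun_prop)).mul (by fun_prop)
    simpa [hw0] using this.tendsto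
  have hinv : Tendsto (fun z : ℂ => 1 / (w z * ((a:ℂ) * z - 1) * ((b:ℂ) * z - 1)))
      (𝓝 (0:ℂ)) (𝓝 (1 / s)) := tendsto_const_nhds.div hD hs0
  -- r₃ = 0
  have h₃' : Tendsto (fun z : ℂ =>
      z * (1 / (w z * ((a:ℂ) * z - 1) * ((b:ℂ) * z - 1)))) (𝓝[≠] (0:ℂ)) (𝓝 0) := by
    have h0 : Tendsto (fun z : ℂ =>
        z * (1 / (w z * ((a:ℂ) * z - 1) * ((b:ℂ) * z - 1)))) (𝓝 (0:ℂ))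
        (𝓝 ((0:ℂ) * (1 / s))) := tendsto_id.mul hinv
    rw [zero_mul] at h0
    exact h0.mono_left nhdsWithin_le_nhds
  have hr₃ : r₃ = 0 := tendsto_nhds_unique h₃ h₃'
  -- r₁ = I/(2s)
  have h₁' : Tendsto (fun z : ℂ =>
      z * ((Complex.I / 2) * (1 / z - z) *
        (1 / (w z * ((a:ℂ) * z - 1) * ((b:ℂ) * z - 1)))))
      (𝓝[≠] (0:ℂ)) (𝓝 (Complex.I / (2 * s))) := by
    have heq : ∀ᶠ z in 𝓝[≠] (0:ℂ),
        (Complex.I / 2) * (1 - z ^ 2) *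
          (1 / (w z * ((a:ℂ) * z - 1) * ((b:ℂ) * z - 1))) =
        z * ((Complex.I / 2) * (1 / z - z) *
          (1 / (w z * ((a:ℂ) * z - 1) * ((b:ℂ) * z - 1)))) := by
      filter_upwards [self_mem_nhdsWithin] with z hz
      have hz' : (z:ℂ) ≠ 0 := hz
      have hzz : z * (1 / z - z) = 1 - z ^ 2 := by field_simp
      rw [← hzz]; ring
    have hlim : Tendsto (fun z : ℂ => (Complex.I / 2) * (1 - z ^ 2) *
        (1 / (w z * ((a:ℂ) * z - 1) * ((b:ℂ) * z - 1))))
        (𝓝 (0:ℂ)) (𝓝 (Complex.I / (2 * s))) := by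
      have h0 : Tendsto (fun z : ℂ => (Complex.I / 2) * (1 - z ^ 2) *
          (1 / (w z * ((a:ℂ) * z - 1) * ((b:ℂ) * z - 1)))) (𝓝 (0:ℂ))
          (𝓝 ((Complex.I / 2) * (1 - (0:ℂ) ^ 2) * (1 / s))) :=
        (tendsto_const_nhds.mul (tendsto_const_nhds.sub (tendsto_id.pow 2))).mul hinv
      convert h0 using 2
      rw [show (1:ℂ) - 0 ^ 2 = 1 by norm_num, mul_one, div_mul_div_comm, mul_one]
    exact (hlim.mono_left nhdsWithin_le_nhds).congr' heq
  have hr₁ : r₁ = Complex.I / (2 * s) := tendsto_nhds_unique h₁ h₁'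
  -- r₂ = -1/(2s)
  have h₂' : Tendsto (fun z : ℂ =>
      z * (-(1 / 2) * (1 / z + z) *
        (1 / (w z * ((a:ℂ) * z - 1) * ((b:ℂ) * z - 1)))))
      (𝓝[≠] (0:ℂ)) (𝓝 (-1 / (2 * s))) := by
    have heq : ∀ᶠ z in 𝓝[≠] (0:ℂ),
        (-(1:ℂ) / 2) * (1 + z ^ 2) *
          (1 / (w z * ((a:ℂ) * z - 1) * ((b:ℂ) * z - 1))) =
        z * (-(1 / 2) * (1 / z + z) *
          (1 / (w z * ((a:ℂ) * z - 1) * ((b:ℂ) * z - 1)))) := by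
      filter_upwards [self_mem_nhdsWithin] with z hz
      have hz' : (z:ℂ) ≠ 0 := hz
      have hzz : z * (1 / z + z) = 1 + z ^ 2 := by field_simp
      rw [← hzz]; ring
    have hlim : Tendsto (fun z : ℂ => (-(1:ℂ) / 2) * (1 + z ^ 2) *
        (1 / (w z * ((a:ℂ) * z - 1) * ((b:ℂ) * z - 1))))
        (𝓝 (0:ℂ)) (𝓝 (-1 / (2 * s))) := by
      have h0 : Tendsto (fun z : ℂ => (-(1:ℂ) / 2) * (1 + z ^ 2) *
          (1 / (w z * ((a:ℂ) * z - 1) * ((b:ℂ) * z - 1)))) (𝓝 (0:ℂ))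
          (𝓝 ((-(1:ℂ) / 2) * (1 + (0:ℂ) ^ 2) * (1 / s))) :=
        (tendsto_const_nhds.mul (tendsto_const_nhds.add (tendsto_id.pow 2))).mul hinv
      convert h0 using 2
      rw [div_mul_eq_mul_div, mul_one_div]
      ring_nf
    exact (hlim.mono_left nhdsWithin_le_nhds).congr' heq
  have hr₂ : r₂ = -1 / (2 * s) := tendsto_nhds_unique h₂ h₂'
  subst hr₁ hr₂ hr₃
  have e1 : 2 * (Real.pi : ℂ) * Complex.I * (Complex.I / (2 * s)) = -(Real.pi : ℂ) / s := by
    field_simp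
    ring_nf
    simp [Complex.I_sq]
  have e2 : 2 * (Real.pi : ℂ) * Complex.I * (-1 / (2 * s)) = -(Real.pi : ℂ) * Complex.I / s := by
    field_simp
  refine ⟨by rw [e1], by rw [e2], by simp, ?_⟩
  rw [e1, e2]
  have hns : 0 < Complex.normSq s := Complex.normSq_pos.2 hs0
  have hre1 : (-(Real.pi : ℂ) / s).re = -Real.pi * s.re / Complex.normSq s := by
    rw [Complex.div_re]
    simp
  have hre2 : (-(Real.pi : ℂ) * Complex.I / s).re = -Real.pi * s.im / Complex.normSq s := by
    rw [Complex.div_re]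
    simp
  rw [hre1, hre2]
  have hkey : (-Real.pi * s.re) ^ 2 + (-Real.pi * s.im) ^ 2
      = Real.pi ^ 2 * Complex.normSq s := by
    rw [Complex.normSq_apply]; ring
  have : (-Real.pi * s.re / Complex.normSq s) ^ 2 + (-Real.pi * s.im / Complex.normSq s) ^ 2
      = Real.pi ^ 2 / Complex.normSq s := by
    rw [div_pow, div_pow, ← add_div, hkey, sq (Complex.normSq s),
      ← div_div, mul_div_assoc, div_self hns.ne', mul_one]
  rw [this]
  positivity
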